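/- Let γ_1, …, γ_m ∈ ℝ^n and k_r⁺, k_r⁻ > 0 for r = 1,…,m, and suppose there is a fixed-point-free involution σ of {1,…,m} with γ_{σ(r)} = −γ_r, k_{σ(r)}⁺ = k_r⁻ and k_{σ(r)}⁻ = k_r⁺. Then there exists x ∈ ℝ^n with ∑_{i=1}^n γ_{r i} x_i = ln k_r⁺ − ln k_r⁻ for all r if and only if for every λ ∈ ℝ^m with λ_r ≥ 0 for all r and ∑_r λ_r γ_r = 0 the Wegscheider identity ∏_{r=1}^m (k_r⁺)^{λ_r} = ∏_{r=1}^m (k_r⁻)^{λ_r} holds. -/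

import Mathlib

open Finset

lemma fredholm_aux (n m : ℕ) (γ : Fin m → Fin n → ℝ) (b : Fin m → ℝ)
    (h : ∀ lam : Fin m → ℝ, (∀ i, ∑ r, lam r * γ r i = 0) → ∑ r, lam r * b r = 0) :
    ∃ x : Fin n → ℝ, ∀ r, ∑ i, γ r i * x i = b r := by
  classical
  let T : EuclideanSpace ℝ (Fin n) →ₗ[ℝ] EuclideanSpace ℝ (Fin m) :=
    { toFun := fun x => WithLp.toLp 2 (fun r => ∑ i, γ r i * x i : Fin m → ℝ)
      map_add' := by
        intro x y; ext r
        show ∑ i, γ r i * (x i + y i) = (∑ i, γ r i * x i) + ∑ i, γ r i * y i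
        simp [mul_add, Finset.sum_add_distrib]
      map_smul' := by
        intro c x; ext r
        show ∑ i, γ r i * (c * x i) = c * ∑ i, γ r i * x i
        simp [Finset.mul_sum, mul_comm, mul_left_comm] }
  let S := LinearMap.range T
  let b' : EuclideanSpace ℝ (Fin m) := WithLp.toLp 2 b
  have hb : b' ∈ S := by
    rw [← Submodule.orthogonal_orthogonal S, Submodule.mem_orthogonal]
    intro lam hlam
    have h1 : ∀ x : EuclideanSpace ℝ (Fin n),
        ∑ r, lam r * (∑ i, γ r i * x i) = 0 := by
      intro x
      have h0 := (Submodule.mem_orthogonal S lam).mp hlam (T x) ⟨x, rfl⟩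
      simpa [PiLp.inner_apply, RCLike.inner_apply, mul_comm, T] using h0
    have hker : ∀ i, ∑ r, lam r * γ r i = 0 := by
      intro i
      have h2 := h1 (WithLp.toLp 2 (fun j => if j = i then (1:ℝ) else 0))
      simpa using h2
    have h3 := h lam hker
    show (inner ℝ lam b' : ℝ) = 0
    simpa [PiLp.inner_apply, RCLike.inner_apply, mul_comm, b'] using h3
  obtain ⟨x, hx⟩ := hb
  exact ⟨x, fun r => congrArg (fun v : EuclideanSpace ℝ (Fin m) => v r) hx⟩

/-- With direct and reverse reactions listed separately (fixed-point-free
involution `σ`), a positive equilibrium with detailed balance exists iff the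
Wegscheider identity holds for every oriented (nonnegative) cycle. -/
theorem detailed_balance_iff_nonneg_wegscheider
    (n m : ℕ) (γ : Fin m → Fin n → ℝ) (kp km : Fin m → ℝ)
    (hkp : ∀ r, 0 < kp r) (hkm : ∀ r, 0 < km r)
    (σ : Fin m → Fin m) (hinv : ∀ r, σ (σ r) = r) (hfpf : ∀ r, σ r ≠ r)
    (hγ : ∀ r, γ (σ r) = -γ r)
    (hpσ : ∀ r, kp (σ r) = km r) (hmσ : ∀ r, km (σ r) = kp r) :
    (∃ x : Fin n → ℝ,
        ∀ r, ∑ i, γ r i * x i = Real.log (kp r) - Real.log (km r)) ↔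
      (∀ lam : Fin m → ℝ, (∀ r, 0 ≤ lam r) → (∀ i, ∑ r, lam r * γ r i = 0) →
        ∏ r, kp r ^ lam r = ∏ r, km r ^ lam r) := by
  classical
  set b : Fin m → ℝ := fun r => Real.log (kp r) - Real.log (km r) with hbdef
  -- product identity ↔ linear identity
  have prod_iff : ∀ lam : Fin m → ℝ,
      (∏ r, kp r ^ lam r = ∏ r, km r ^ lam r) ↔ ∑ r, lam r * b r = 0 := by
    intro lam
    have hP : ∀ (k : Fin m → ℝ), (∀ r, 0 < k r) →
        ∏ r, k r ^ lam r = Real.exp (∑ r, lam r * Real.log (k r)) := by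
      intro k hk
      rw [Real.exp_sum]
      refine Finset.prod_congr rfl fun r _ => ?_
      rw [Real.rpow_def_of_pos (hk r), mul_comm]
    rw [hP kp hkp, hP km hkm, Real.exp_eq_exp]
    constructor
    · intro hh
      simp only [hbdef, mul_sub]
      rw [Finset.sum_sub_distrib, hh, sub_self]
    · intro hh
      have : ∑ r, lam r * Real.log (kp r) - ∑ r, lam r * Real.log (km r) = 0 := by
        rw [← Finset.sum_sub_distrib]
        simpa [hbdef, mul_sub] using hh
      linarith
  constructor
  · -- existence → Wegscheider
    rintro ⟨x, hx⟩ lam _ hker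
    rw [prod_iff lam]
    calc ∑ r, lam r * b r = ∑ r, lam r * ∑ i, γ r i * x i := by
          refine Finset.sum_congr rfl fun r _ => by rw [hx r]
      _ = ∑ r, ∑ i, lam r * γ r i * x i := by
          refine Finset.sum_congr rfl fun r _ => by
            rw [Finset.mul_sum]; exact Finset.sum_congr rfl fun i _ => by ring
      _ = ∑ i, (∑ r, lam r * γ r i) * x i := by
          rw [Finset.sum_comm]
          refine Finset.sum_congr rfl fun i _ => by rw [Finset.sum_mul]
      _ = 0 := by simp [hker]
  · -- Wegscheider → existence
    intro hW
    apply fredholm_aux n m γ b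
    intro lam hker
    -- decompose lam into nonnegative μ using the involution
    set μ : Fin m → ℝ := fun r => max (lam r) 0 + max (-(lam (σ r))) 0 with hμdef
    have hμ0 : ∀ r, 0 ≤ μ r := fun r => add_nonneg (le_max_right _ _) (le_max_right _ _)
    have reindex : ∀ f : Fin m → ℝ, ∑ r, f (σ r) = ∑ r, f r := by
      intro f
      exact Fintype.sum_equiv (Function.Involutive.toPerm σ hinv) _ _ (fun r => rfl)
    have key : ∀ g : Fin m → ℝ, (∀ r, g (σ r) = - g r) →
        ∑ r, μ r * g r = ∑ r, lam r * g r := by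
      intro g hg
      have h1 : ∑ r, μ r * g r
          = ∑ r, max (lam r) 0 * g r + ∑ r, max (-(lam (σ r))) 0 * g r := by
        rw [← Finset.sum_add_distrib]
        exact Finset.sum_congr rfl fun r _ => by rw [hμdef]; ring
      have h2 : ∑ r, max (-(lam (σ r))) 0 * g r
          = - ∑ r, max (-(lam r)) 0 * g r := by
        have := reindex (fun r => max (-(lam (σ r))) 0 * g r)
        rw [← this]
        rw [← Finset.sum_neg_distrib]
        refine Finset.sum_congr rfl fun r _ => ?_
        rw [hinv r, hg r]; ring
      rw [h1, h2, ← sub_eq_add_neg, ← Finset.sum_sub_distrib]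
      refine Finset.sum_congr rfl fun r _ => ?_
      have : max (lam r) 0 - max (-(lam r)) 0 = lam r := by
        rcases le_total (lam r) 0 with hc | hc
        · rw [max_eq_right hc, max_eq_left (by linarith)]; ring
        · rw [max_eq_left hc, max_eq_right (by linarith)]; ring
      calc max (lam r) 0 * g r - max (-(lam r)) 0 * g r
          = (max (lam r) 0 - max (-(lam r)) 0) * g r := by ring
        _ = lam r * g r := by rw [this]
    have hbσ : ∀ r, b (σ r) = - b r := by
      intro r; simp [hbdef, hpσ r, hmσ r]
    have hμker : ∀ i, ∑ r, μ r * γ r i = 0 := by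
      intro i
      have := key (fun r => γ r i) (fun r => by show γ (σ r) i = -(γ r i); rw [hγ r]; simp)
      rw [this]; exact hker i
    have hμb : ∑ r, μ r * b r = ∑ r, lam r * b r := key b hbσ
    have := hW μ hμ0 hμker
    rw [prod_iff μ] at this
    rw [← hμb]; exact this
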